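/- arXiv:1703.10308 — 3 statements merged into one kernel-verified Lean document; each statement's English description precedes it below -/
import Mathlib

section
/- Let α, x, y be real numbers with 1 < α < 2 and 0 < y ≤ x. Then (1/Γ(2−α)) · ∫_0^{√2·y} ω^{1−α} · [ (x−ω/√2)² + (y−ω/√2)² + 4·(x−ω/√2)·(y−ω/√2) ] dω = 2^{1−α/2} · y^{2−α} · ( (α−4)·(α−3)·x² − 2·(α−4)·α·x·y + (α−1)·α·y² ) / Γ(5−α). -/
open Real

/-- The Caputo fractional directional derivative `D^α_{π/4}` of `u(x,y) = x²y²`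
on the unit square at a point `(x,y)` with `x ≥ y`, giving the source term `f*`
of Examples 5.3(ii) and 5.6. -/
theorem example_5_3_ii_directional_derivative (α x y : ℝ) (hα₁ : 1 < α) (hα₂ : α < 2)
    (hy : 0 < y) (hyx : y ≤ x) :
    (1 / Real.Gamma (2 - α)) *
        ∫ ω in (0 : ℝ)..(Real.sqrt 2 * y),
          ω ^ (1 - α) *
            ((x - ω / Real.sqrt 2) ^ 2 + (y - ω / Real.sqrt 2) ^ 2 +
              4 * (x - ω / Real.sqrt 2) * (y - ω / Real.sqrt 2)) =
      2 ^ (1 - α / 2) * y ^ (2 - α) *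
          ((α - 4) * (α - 3) * x ^ 2 - 2 * (α - 4) * α * x * y + (α - 1) * α * y ^ 2) /
        Real.Gamma (5 - α) := by
  have h2 : (0:ℝ) < 2 := by norm_num
  have hs2 : (0:ℝ) < Real.sqrt 2 := Real.sqrt_pos.mpr h2
  have hsq : Real.sqrt 2 * Real.sqrt 2 = 2 := Real.mul_self_sqrt h2.le
  set T := Real.sqrt 2 * y with hTdef
  have hTpos : 0 < T := mul_pos hs2 hy
  have hne1 : (1:ℝ) - α ≠ 0 := by linarith
  have hne2 : (2:ℝ) - α ≠ 0 := by linarith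
  have hne3 : (3:ℝ) - α ≠ 0 := by linarith
  have hne4 : (4:ℝ) - α ≠ 0 := by linarith
  have hcong : (∫ ω in (0:ℝ)..T,
      ω ^ (1 - α) * ((x - ω / Real.sqrt 2) ^ 2 + (y - ω / Real.sqrt 2) ^ 2 +
        4 * (x - ω / Real.sqrt 2) * (y - ω / Real.sqrt 2)))
      = ∫ ω in (0:ℝ)..T,
        ((x^2 + y^2 + 4*x*y) * ω ^ (1 - α)
          - (3 * Real.sqrt 2 * (x + y)) * ω ^ (2 - α) + 3 * ω ^ (3 - α)) := by
    apply intervalIntegral.integral_congr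
    intro ω hω
    rw [Set.uIcc_of_le hTpos.le] at hω
    rcases eq_or_lt_of_le hω.1 with h0 | h0
    · simp [← h0, Real.zero_rpow hne1, Real.zero_rpow hne2, Real.zero_rpow hne3]
    · have e2 : ω ^ ((2:ℝ) - α) = ω ^ ((1:ℝ) - α) * ω := by
        rw [show (2:ℝ) - α = (1 - α) + 1 by ring, Real.rpow_add h0, Real.rpow_one]
      have e3 : ω ^ ((3:ℝ) - α) = ω ^ ((1:ℝ) - α) * ω ^ 2 := by
        rw [show (3:ℝ) - α = (1 - α) + 2 by ring, Real.rpow_add h0,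
          Real.rpow_two]
      have key : (x - ω / Real.sqrt 2) ^ 2 + (y - ω / Real.sqrt 2) ^ 2 +
          4 * (x - ω / Real.sqrt 2) * (y - ω / Real.sqrt 2)
          = (x^2 + y^2 + 4*x*y) - 3 * Real.sqrt 2 * (x + y) * ω + 3 * ω ^ 2 := by
        have hsq2 : Real.sqrt 2 ^ 2 = 2 := Real.sq_sqrt h2.le
        field_simp
        linear_combination (- 3 * ω ^ 2 + 3 * Real.sqrt 2 * ω * (x + y)) * hsq2
      show ω ^ (1 - α) * ((x - ω / Real.sqrt 2) ^ 2 + (y - ω / Real.sqrt 2) ^ 2 +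
          4 * (x - ω / Real.sqrt 2) * (y - ω / Real.sqrt 2))
        = (x^2 + y^2 + 4*x*y) * ω ^ (1 - α)
          - (3 * Real.sqrt 2 * (x + y)) * ω ^ (2 - α) + 3 * ω ^ (3 - α)
      rw [key, e2, e3]
      ring
  have i1 : IntervalIntegrable (fun ω : ℝ => ω ^ ((1:ℝ) - α)) MeasureTheory.volume 0 T :=
    intervalIntegral.intervalIntegrable_rpow' (by linarith)
  have i2 : IntervalIntegrable (fun ω : ℝ => ω ^ ((2:ℝ) - α)) MeasureTheory.volume 0 T :=
    intervalIntegral.intervalIntegrable_rpow' (by linarith)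
  have i3 : IntervalIntegrable (fun ω : ℝ => ω ^ ((3:ℝ) - α)) MeasureTheory.volume 0 T :=
    intervalIntegral.intervalIntegrable_rpow' (by linarith)
  have hint : (∫ ω in (0:ℝ)..T,
        ((x^2 + y^2 + 4*x*y) * ω ^ (1 - α)
          - (3 * Real.sqrt 2 * (x + y)) * ω ^ (2 - α) + 3 * ω ^ (3 - α)))
      = (x^2 + y^2 + 4*x*y) * (T ^ (2 - α) / (2 - α))
        - (3 * Real.sqrt 2 * (x + y)) * (T ^ (3 - α) / (3 - α))
        + 3 * (T ^ (4 - α) / (4 - α)) := by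
    rw [intervalIntegral.integral_add ((i1.const_mul _).sub (i2.const_mul _)) (i3.const_mul 3),
      intervalIntegral.integral_sub (i1.const_mul _) (i2.const_mul _),
      intervalIntegral.integral_const_mul, intervalIntegral.integral_const_mul,
      intervalIntegral.integral_const_mul,
      integral_rpow (Or.inl (by linarith : (-1:ℝ) < 1 - α)),
      integral_rpow (Or.inl (by linarith : (-1:ℝ) < 2 - α)),
      integral_rpow (Or.inl (by linarith : (-1:ℝ) < 3 - α))]
    rw [show (1:ℝ) - α + 1 = 2 - α by ring, show (2:ℝ) - α + 1 = 3 - α by ring,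
      show (3:ℝ) - α + 1 = 4 - α by ring,
      Real.zero_rpow hne2, Real.zero_rpow hne3, Real.zero_rpow hne4]
    ring
  have hT2 : T ^ ((2:ℝ) - α) = 2 ^ (1 - α/2) * y ^ ((2:ℝ) - α) := by
    rw [hTdef, Real.mul_rpow hs2.le hy.le]
    congr 1
    rw [show (1:ℝ) - α/2 = (1/2) * (2 - α) by ring,
      Real.rpow_mul (by norm_num : (0:ℝ) ≤ 2), ← Real.sqrt_eq_rpow]
  have hT3 : T ^ ((3:ℝ) - α) = 2 ^ (1 - α/2) * y ^ ((2:ℝ) - α) * T := by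
    rw [show (3:ℝ) - α = (2 - α) + 1 by ring, Real.rpow_add hTpos, Real.rpow_one, hT2]
  have hT4 : T ^ ((4:ℝ) - α) = 2 ^ (1 - α/2) * y ^ ((2:ℝ) - α) * (2 * y ^ 2) := by
    rw [show (4:ℝ) - α = (2 - α) + 2 by ring, Real.rpow_add hTpos, Real.rpow_two, hT2, hTdef]
    linear_combination 2 ^ (1 - α/2) * y ^ ((2:ℝ) - α) * y ^ 2 * hsq
  have hg2 : 0 < Real.Gamma (2 - α) := Real.Gamma_pos_of_pos (by linarith)
  have hΓ : Real.Gamma (5 - α) = (4 - α) * ((3 - α) * ((2 - α) * Real.Gamma (2 - α))) := by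
    rw [show (5:ℝ) - α = (4 - α) + 1 by ring, Real.Gamma_add_one hne4,
      show (4:ℝ) - α = (3 - α) + 1 by ring, Real.Gamma_add_one hne3,
      show (3:ℝ) - α = (2 - α) + 1 by ring, Real.Gamma_add_one hne2]
  set K := (2:ℝ) ^ (1 - α/2) * y ^ ((2:ℝ) - α) with hK
  have hMid : 3 * Real.sqrt 2 * (x + y) * (T ^ ((3:ℝ) - α) / (3 - α))
      = 6 * (x + y) * y * K / (3 - α) := by
    rw [hT3, hTdef]
    linear_combination 3 * (x + y) * K * y / (3 - α) * hsq
  rw [hcong, hint, hMid, hT4, hT2, hΓ]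
  have hg2' : Real.Gamma (2 - α) ≠ 0 := hg2.ne'
  field_simp
  ring
end

section
/- Let α, Y, x be real numbers with 1 < α < 2, Y > 0, and 0 < x ≤ Y/2, and let p : ℝ → ℝ be p(ω) = ω³·(Y/2 − ω)³. Then x^α · (1/Γ(2−α)) · ∫_0^x (x−ω)^{1−α} · p''(ω) dω = (3/4)·x³·Y³/Γ(4−α) − 18·x⁴·Y²/Γ(5−α) + 180·x⁵·Y/Γ(6−α) − 720·x⁶/Γ(7−α), where p'' denotes the second derivative of p. -/
open Real

lemma mom_integrable (r : ℝ) (hr : -1 < r) (n : ℕ) (x : ℝ) :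
    IntervalIntegrable (fun t : ℝ => t ^ r * t ^ n) MeasureTheory.volume 0 x :=
  (intervalIntegral.intervalIntegrable_rpow' hr).mul_continuousOn
    (continuous_pow n).continuousOn

lemma mom (r x : ℝ) (hx : 0 ≤ x) (n : ℕ) (hr : -1 < r) (hrn : r + n ≠ 0) :
    ∫ t in (0:ℝ)..x, t ^ r * t ^ n = x ^ (r + n + 1) / (r + n + 1) := by
  have h1 : Set.EqOn (fun t : ℝ => t ^ r * t ^ n) (fun t : ℝ => t ^ (r + (n : ℝ)))
      (Set.uIcc (0:ℝ) x) := by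
    intro t ht
    rw [Set.uIcc_of_le hx] at ht
    simp only
    rw [← Real.rpow_natCast t n, ← Real.rpow_add' ht.1 hrn]
  have hrn' : (-1 : ℝ) < r + n := by
    have : (0:ℝ) ≤ (n:ℝ) := Nat.cast_nonneg n
    linarith
  rw [intervalIntegral.integral_congr h1, integral_rpow (Or.inl hrn')]
  rw [Real.zero_rpow (by linarith)]
  ring

lemma aux (α x : ℝ) (hα₁ : 1 < α) (hα₂ : α < 2) (hx : 0 < x) (k : ℕ) :
    ∫ ω in (0:ℝ)..x, (x - ω) ^ (1 - α) * ω ^ k =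
      (∑ j ∈ Finset.range (k+1),
        (k.choose j : ℝ) * (-1:ℝ)^(k-j) / (2 - α + (k:ℝ) - j)) * x ^ ((k:ℝ) + 2 - α) := by
  have hr : (-1:ℝ) < 1 - α := by linarith
  have h0 : (fun ω : ℝ => (x - ω) ^ (1 - α) * ω ^ k)
      = fun ω => (fun t : ℝ => t ^ (1 - α) * (x - t) ^ k) (x - ω) := by
    funext ω; simp only; rw [show x - (x - ω) = ω by ring]
  rw [h0, intervalIntegral.integral_comp_sub_left (fun t : ℝ => t ^ (1 - α) * (x - t) ^ k) x]
  rw [sub_self, sub_zero]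
  have h2 : ∀ t : ℝ, t ^ (1 - α) * (x - t) ^ k =
      ∑ j ∈ Finset.range (k+1),
        ((k.choose j : ℝ) * (-1:ℝ)^(k-j) * x ^ j) * (t ^ (1 - α) * t ^ (k - j)) := by
    intro t
    rw [show x - t = x + (-t) by ring, add_pow, Finset.mul_sum]
    refine Finset.sum_congr rfl fun j hj => ?_
    rw [neg_pow]
    ring
  simp_rw [h2]
  rw [intervalIntegral.integral_finset_sum (fun j hj =>
    ((mom_integrable (1 - α) hr (k - j) x).const_mul _))]
  rw [Finset.sum_mul]
  refine Finset.sum_congr rfl fun j hj => ?_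
  have hjk : j ≤ k := Nat.lt_succ_iff.mp (Finset.mem_range.mp hj)
  have hcast : ((k - j : ℕ) : ℝ) = (k : ℝ) - j := by
    exact Nat.cast_sub hjk

  have hne : (1 - α) + ((k - j : ℕ) : ℝ) ≠ 0 := by
    rw [hcast]
    have : (j:ℝ) ≤ k := by exact_mod_cast hjk
    rcases Nat.eq_or_lt_of_le hjk with h | h
    · rw [h]; intro hc; simp at hc; linarith
    · have : (j:ℝ) + 1 ≤ k := by exact_mod_cast h
      intro hc; linarith
  rw [intervalIntegral.integral_const_mul, mom (1 - α) x hx.le (k - j) hr hne]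
  rw [hcast]
  have hxpow : x ^ j * x ^ ((1 - α) + ((k:ℝ) - j) + 1) = x ^ ((k:ℝ) + 2 - α) := by
    rw [← Real.rpow_natCast x j, ← Real.rpow_add hx]
    congr 1; ring
  rw [show (1 - α) + ((k:ℝ) - j) + 1 = 2 - α + (k:ℝ) - j by ring]
  field_simp
  rw [← hxpow, show (1 - α) + ((k:ℝ) - j) + 1 = 2 - α + (k:ℝ) - j by ring]
  ring

set_option maxHeartbeats 1000000 in
/-- The left Caputo fractional derivative (times `x^α`) of
`p(ω) = ω³ (Y/2 − ω)³`, giving the function `g₁*` of Example 5.4. -/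
theorem example_5_4_g1 (α Y x : ℝ) (hα₁ : 1 < α) (hα₂ : α < 2) (hY : 0 < Y)
    (hx₀ : 0 < x) (hx₁ : x ≤ Y / 2)
    (p : ℝ → ℝ) (hp : ∀ ω, p ω = ω ^ 3 * (Y / 2 - ω) ^ 3) :
    x ^ α * ((1 / Real.Gamma (2 - α)) *
        ∫ ω in (0 : ℝ)..x, (x - ω) ^ (1 - α) * deriv (deriv p) ω) =
      (3 / 4) * x ^ 3 * Y ^ 3 / Real.Gamma (4 - α) -
        18 * x ^ 4 * Y ^ 2 / Real.Gamma (5 - α) +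
        180 * x ^ 5 * Y / Real.Gamma (6 - α) -
        720 * x ^ 6 / Real.Gamma (7 - α) := by
  set a : ℝ := Y / 2 with ha
  have hpfun : p = fun ω => a^3*ω^3 - 3*a^2*ω^4 + 3*a*ω^5 - ω^6 := by
    funext ω; rw [hp]; ring
  have hd1 : deriv p = fun ω => 3*a^3*ω^2 - 12*a^2*ω^3 + 15*a*ω^4 - 6*ω^5 := by
    funext ω
    rw [hpfun]
    have h : HasDerivAt (fun ω : ℝ => a^3*ω^3 - 3*a^2*ω^4 + 3*a*ω^5 - ω^6)
        (3*a^3*ω^2 - 12*a^2*ω^3 + 15*a*ω^4 - 6*ω^5) ω := by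
      have := ((((hasDerivAt_pow 3 ω).const_mul (a^3)).sub
        ((hasDerivAt_pow 4 ω).const_mul (3*a^2))).add
        ((hasDerivAt_pow 5 ω).const_mul (3*a))).sub (hasDerivAt_pow 6 ω)
      refine this.congr_deriv ?_
      norm_num; ring
    exact h.deriv
  have hd2 : deriv (deriv p) = fun ω => 6*a^3*ω - 36*a^2*ω^2 + 60*a*ω^3 - 30*ω^4 := by
    rw [hd1]
    funext ω
    have h : HasDerivAt (fun ω : ℝ => 3*a^3*ω^2 - 12*a^2*ω^3 + 15*a*ω^4 - 6*ω^5)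
        (6*a^3*ω - 36*a^2*ω^2 + 60*a*ω^3 - 30*ω^4) ω := by
      have := ((((hasDerivAt_pow 2 ω).const_mul (3*a^3)).sub
        ((hasDerivAt_pow 3 ω).const_mul (12*a^2))).add
        ((hasDerivAt_pow 4 ω).const_mul (15*a))).sub
        ((hasDerivAt_pow 5 ω).const_mul 6)
      refine this.congr_deriv ?_
      norm_num; ring
    exact h.deriv
  -- integrability of (x-ω)^(1-α) * ω^k
  have hr : (-1:ℝ) < 1 - α := by linarith
  have hI : ∀ k : ℕ, IntervalIntegrable (fun ω : ℝ => (x - ω) ^ (1 - α) * ω ^ k)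
      MeasureTheory.volume 0 x := by
    intro k
    have h1 : IntervalIntegrable (fun ω : ℝ => (x - ω) ^ (1 - α))
        MeasureTheory.volume 0 x := by
      have := (intervalIntegral.intervalIntegrable_rpow' (a := 0) (b := x) hr).comp_sub_left x
      simpa using this.symm
    exact h1.mul_continuousOn (continuous_pow k).continuousOn
  have hsplit : (∫ ω in (0:ℝ)..x, (x - ω) ^ (1 - α) * deriv (deriv p) ω) =
      6*a^3 * (∫ ω in (0:ℝ)..x, (x - ω) ^ (1 - α) * ω ^ 1)
      - 36*a^2 * (∫ ω in (0:ℝ)..x, (x - ω) ^ (1 - α) * ω ^ 2)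
      + 60*a * (∫ ω in (0:ℝ)..x, (x - ω) ^ (1 - α) * ω ^ 3)
      - 30 * (∫ ω in (0:ℝ)..x, (x - ω) ^ (1 - α) * ω ^ 4) := by
    rw [hd2]
    have heq : (fun ω : ℝ => (x - ω) ^ (1 - α) * (6*a^3*ω - 36*a^2*ω^2 + 60*a*ω^3 - 30*ω^4))
        = fun ω : ℝ => 6*a^3 * ((x - ω) ^ (1 - α) * ω ^ 1)
          - 36*a^2 * ((x - ω) ^ (1 - α) * ω ^ 2)
          + 60*a * ((x - ω) ^ (1 - α) * ω ^ 3)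
          - 30 * ((x - ω) ^ (1 - α) * ω ^ 4) := by
      funext ω; ring
    rw [heq]
    rw [intervalIntegral.integral_sub (((((hI 1).const_mul _).sub
      ((hI 2).const_mul _)).add ((hI 3).const_mul _))) ((hI 4).const_mul _),
      intervalIntegral.integral_add ((((hI 1).const_mul _).sub
      ((hI 2).const_mul _))) ((hI 3).const_mul _),
      intervalIntegral.integral_sub ((hI 1).const_mul _) ((hI 2).const_mul _),
      intervalIntegral.integral_const_mul, intervalIntegral.integral_const_mul,
      intervalIntegral.integral_const_mul, intervalIntegral.integral_const_mul]
  have hJ1 := aux α x hα₁ hα₂ hx₀ 1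
  have hJ2 := aux α x hα₁ hα₂ hx₀ 2
  have hJ3 := aux α x hα₁ hα₂ hx₀ 3
  have hJ4 := aux α x hα₁ hα₂ hx₀ 4
  have hxp : ∀ k : ℕ, x ^ α * x ^ ((k:ℝ) + 2 - α) = x ^ (k + 2) := by
    intro k
    rw [← Real.rpow_add hx₀, show α + ((k:ℝ) + 2 - α) = ((k + 2 : ℕ) : ℝ) by push_cast; ring,
      Real.rpow_natCast]
  have h2α : (0:ℝ) < 2 - α := by linarith
  have hΓ : Real.Gamma (2 - α) ≠ 0 := (Real.Gamma_pos_of_pos h2α).ne'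
  have d2 : (2:ℝ) - α ≠ 0 := by linarith
  have d3 : (3:ℝ) - α ≠ 0 := by linarith
  have d4 : (4:ℝ) - α ≠ 0 := by linarith
  have d5 : (5:ℝ) - α ≠ 0 := by linarith
  have d6 : (6:ℝ) - α ≠ 0 := by linarith
  have hS1 : (∑ j ∈ Finset.range (1+1),
      ((1:ℕ).choose j : ℝ) * (-1:ℝ)^(1-j) / (2 - α + ((1:ℕ):ℝ) - j))
      = 1 / ((2 - α) * (3 - α)) := by
    norm_num [Finset.sum_range_succ, Nat.choose]
    rw [show (2:ℝ)-α+1 = 3-α by ring]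
    field_simp
    ring
  have hS2 : (∑ j ∈ Finset.range (2+1),
      ((2:ℕ).choose j : ℝ) * (-1:ℝ)^(2-j) / (2 - α + ((2:ℕ):ℝ) - j))
      = 2 / ((2 - α) * (3 - α) * (4 - α)) := by
    norm_num [Finset.sum_range_succ, Nat.choose]
    rw [show (2:ℝ)-α+2 = 4-α by ring, show (4:ℝ)-α-1 = 3-α by ring]
    field_simp
    ring
  have hS3 : (∑ j ∈ Finset.range (3+1),
      ((3:ℕ).choose j : ℝ) * (-1:ℝ)^(3-j) / (2 - α + ((3:ℕ):ℝ) - j))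
      = 6 / ((2 - α) * (3 - α) * (4 - α) * (5 - α)) := by
    norm_num [Finset.sum_range_succ, Nat.choose]
    rw [show (2:ℝ)-α+3 = 5-α by ring, show (5:ℝ)-α-1 = 4-α by ring,
      show (5:ℝ)-α-2 = 3-α by ring]
    field_simp
    ring
  have hS4 : (∑ j ∈ Finset.range (4+1),
      ((4:ℕ).choose j : ℝ) * (-1:ℝ)^(4-j) / (2 - α + ((4:ℕ):ℝ) - j))
      = 24 / ((2 - α) * (3 - α) * (4 - α) * (5 - α) * (6 - α)) := by
    norm_num [Finset.sum_range_succ, Nat.choose]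
    rw [show (2:ℝ)-α+4 = 6-α by ring, show (6:ℝ)-α-1 = 5-α by ring,
      show (6:ℝ)-α-2 = 4-α by ring, show (6:ℝ)-α-3 = 3-α by ring]
    field_simp
    ring
  rw [hS1] at hJ1
  rw [hS2] at hJ2
  rw [hS3] at hJ3
  rw [hS4] at hJ4
  have K1 : x ^ α * ∫ ω in (0:ℝ)..x, (x - ω) ^ (1 - α) * ω ^ 1
      = x ^ 3 / ((2 - α) * (3 - α)) := by
    rw [hJ1, show x ^ α * (1 / ((2 - α) * (3 - α)) * x ^ (((1:ℕ):ℝ) + 2 - α))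
      = 1 / ((2 - α) * (3 - α)) * (x ^ α * x ^ (((1:ℕ):ℝ) + 2 - α)) by ring, hxp 1]
    ring
  have K2 : x ^ α * ∫ ω in (0:ℝ)..x, (x - ω) ^ (1 - α) * ω ^ 2
      = 2 * x ^ 4 / ((2 - α) * (3 - α) * (4 - α)) := by
    rw [hJ2, show x ^ α * (2 / ((2 - α) * (3 - α) * (4 - α)) * x ^ (((2:ℕ):ℝ) + 2 - α))
      = 2 / ((2 - α) * (3 - α) * (4 - α)) * (x ^ α * x ^ (((2:ℕ):ℝ) + 2 - α)) by ring, hxp 2]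
    ring
  have K3 : x ^ α * ∫ ω in (0:ℝ)..x, (x - ω) ^ (1 - α) * ω ^ 3
      = 6 * x ^ 5 / ((2 - α) * (3 - α) * (4 - α) * (5 - α)) := by
    rw [hJ3, show x ^ α * (6 / ((2 - α) * (3 - α) * (4 - α) * (5 - α)) * x ^ (((3:ℕ):ℝ) + 2 - α))
      = 6 / ((2 - α) * (3 - α) * (4 - α) * (5 - α)) * (x ^ α * x ^ (((3:ℕ):ℝ) + 2 - α)) by ring,
      hxp 3]
    ring
  have K4 : x ^ α * ∫ ω in (0:ℝ)..x, (x - ω) ^ (1 - α) * ω ^ 4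
      = 24 * x ^ 6 / ((2 - α) * (3 - α) * (4 - α) * (5 - α) * (6 - α)) := by
    rw [hJ4, show x ^ α *
        (24 / ((2 - α) * (3 - α) * (4 - α) * (5 - α) * (6 - α)) * x ^ (((4:ℕ):ℝ) + 2 - α))
      = 24 / ((2 - α) * (3 - α) * (4 - α) * (5 - α) * (6 - α)) *
        (x ^ α * x ^ (((4:ℕ):ℝ) + 2 - α)) by ring, hxp 4]
    ring
  have e3 : Real.Gamma (3 - α) = (2 - α) * Real.Gamma (2 - α) := by
    rw [show (3:ℝ) - α = (2 - α) + 1 by ring, Real.Gamma_add_one (by linarith)]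
  have e4 : Real.Gamma (4 - α) = (3 - α) * Real.Gamma (3 - α) := by
    rw [show (4:ℝ) - α = (3 - α) + 1 by ring, Real.Gamma_add_one (by linarith)]
  have e5 : Real.Gamma (5 - α) = (4 - α) * Real.Gamma (4 - α) := by
    rw [show (5:ℝ) - α = (4 - α) + 1 by ring, Real.Gamma_add_one (by linarith)]
  have e6 : Real.Gamma (6 - α) = (5 - α) * Real.Gamma (5 - α) := by
    rw [show (6:ℝ) - α = (5 - α) + 1 by ring, Real.Gamma_add_one (by linarith)]
  have e7 : Real.Gamma (7 - α) = (6 - α) * Real.Gamma (6 - α) := by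
    rw [show (7:ℝ) - α = (6 - α) + 1 by ring, Real.Gamma_add_one (by linarith)]
  rw [hsplit]
  rw [show x ^ α * ((1 / Real.Gamma (2 - α)) *
      (6*a^3 * (∫ ω in (0:ℝ)..x, (x - ω) ^ (1 - α) * ω ^ 1)
      - 36*a^2 * (∫ ω in (0:ℝ)..x, (x - ω) ^ (1 - α) * ω ^ 2)
      + 60*a * (∫ ω in (0:ℝ)..x, (x - ω) ^ (1 - α) * ω ^ 3)
      - 30 * (∫ ω in (0:ℝ)..x, (x - ω) ^ (1 - α) * ω ^ 4)))
    = (1 / Real.Gamma (2 - α)) *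
      (6*a^3 * (x ^ α * ∫ ω in (0:ℝ)..x, (x - ω) ^ (1 - α) * ω ^ 1)
      - 36*a^2 * (x ^ α * ∫ ω in (0:ℝ)..x, (x - ω) ^ (1 - α) * ω ^ 2)
      + 60*a * (x ^ α * ∫ ω in (0:ℝ)..x, (x - ω) ^ (1 - α) * ω ^ 3)
      - 30 * (x ^ α * ∫ ω in (0:ℝ)..x, (x - ω) ^ (1 - α) * ω ^ 4)) by ring]
  rw [K1, K2, K3, K4, e7, e6, e5, e4, e3, ha]
  field_simp
  ring
end

section
/- Let α, Y, x be real numbers with 1 < α < 2, Y > 0, and 0 ≤ x < Y/2, and let p : ℝ → ℝ be p(ω) = ω³·(Y/2 − ω)³. Then (Y/2 − x)^{α−3} · (1/Γ(2−α)) · ∫_x^{Y/2} (ω−x)^{1−α} · p''(ω) dω = ( −(3/4)·(α−2)·(α−1)·α·Y³ + 18·(α−1)·α·x·Y² − 180·α·x²·Y + 720·x³ ) / Γ(7−α), where p'' denotes the second derivative of p. -/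
open Real

set_option maxHeartbeats 1000000

/-- The right Caputo fractional derivative (times `(Y/2 − x)^{α−3}`) of
`p(ω) = ω³ (Y/2 − ω)³`, giving the function `g₂*` of Example 5.4. -/
theorem example_5_4_g2 (α Y x : ℝ) (hα₁ : 1 < α) (hα₂ : α < 2) (hY : 0 < Y)
    (hx₀ : 0 ≤ x) (hx₁ : x < Y / 2)
    (p : ℝ → ℝ) (hp : ∀ ω, p ω = ω ^ 3 * (Y / 2 - ω) ^ 3) :
    (Y / 2 - x) ^ (α - 3) * ((1 / Real.Gamma (2 - α)) *
        ∫ ω in x..(Y / 2), (ω - x) ^ (1 - α) * deriv (deriv p) ω) =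
      (-(3 / 4) * (α - 2) * (α - 1) * α * Y ^ 3 + 18 * (α - 1) * α * x * Y ^ 2 -
          180 * α * x ^ 2 * Y + 720 * x ^ 3) /
        Real.Gamma (7 - α) := by
  have hs : (0:ℝ) < Y / 2 - x := by linarith
  -- first derivative
  have hpE : p = fun ω => (Y/2)^3*ω^3 - 3*(Y/2)^2*ω^4 + (3*(Y/2)*ω^5 - ω^6) := by
    funext t; rw [hp]; ring
  have h1 : ∀ ω : ℝ, HasDerivAt p
      (3*(Y/2)^3*ω^2 - 12*(Y/2)^2*ω^3 + (15*(Y/2)*ω^4 - 6*ω^5)) ω := by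
    intro ω
    rw [hpE]
    have h := (((hasDerivAt_pow 3 ω).const_mul ((Y/2)^3)).sub
        ((hasDerivAt_pow 4 ω).const_mul (3*(Y/2)^2))).add
      (((hasDerivAt_pow 5 ω).const_mul (3*(Y/2))).sub (hasDerivAt_pow 6 ω))
    refine h.congr_deriv ?_
    push_cast; ring
  have hd1 : deriv p = fun ω => 3*(Y/2)^3*ω^2 - 12*(Y/2)^2*ω^3 + (15*(Y/2)*ω^4 - 6*ω^5) :=
    funext fun ω => (h1 ω).deriv
  -- second derivative
  have h2 : ∀ ω : ℝ, HasDerivAt (deriv p)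
      (6*(Y/2)^3*ω - 36*(Y/2)^2*ω^2 + (60*(Y/2)*ω^3 - 30*ω^4)) ω := by
    intro ω
    rw [hd1]
    have h := (((hasDerivAt_pow 2 ω).const_mul (3*(Y/2)^3)).sub
        ((hasDerivAt_pow 3 ω).const_mul (12*(Y/2)^2))).add
      (((hasDerivAt_pow 4 ω).const_mul (15*(Y/2))).sub
        ((hasDerivAt_pow 5 ω).const_mul 6))
    refine h.congr_deriv ?_
    push_cast; ring
  have hd2 : ∀ ω : ℝ, deriv (deriv p) ω
      = 6*(Y/2)^3*ω - 36*(Y/2)^2*ω^2 + (60*(Y/2)*ω^3 - 30*ω^4) :=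
    fun ω => (h2 ω).deriv
  -- evaluation of the power integrals
  have hIval : ∀ γ : ℝ, -1 < γ →
      (∫ ω in x..(Y/2), (ω - x) ^ γ) = (Y/2 - x) ^ (γ + 1) / (γ + 1) := by
    intro γ hγ
    have hshift : (∫ ω in x..(Y/2), (ω - x) ^ γ)
        = ∫ u in (x - x)..(Y/2 - x), u ^ γ :=
      intervalIntegral.integral_comp_sub_right (fun u => u ^ γ) x
    rw [hshift, integral_rpow (Or.inl hγ), sub_self,
      Real.zero_rpow (by linarith), sub_zero]
  -- integrability of the power functions
  have hInt : ∀ γ : ℝ, -1 < γ →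
      IntervalIntegrable (fun ω => (ω - x) ^ γ) MeasureTheory.volume x (Y/2) := by
    intro γ hγ
    have h : IntervalIntegrable (fun ω => (ω - x) ^ γ) MeasureTheory.volume
        (0 + x) ((Y/2 - x) + x) :=
      (intervalIntegral.intervalIntegrable_rpow' hγ (a := 0) (b := Y/2 - x)).comp_sub_right x
    simpa using h
  have J1 := hInt (1-α) (by linarith)
  have J2 := hInt (2-α) (by linarith)
  have J3 := hInt (3-α) (by linarith)
  have J4 := hInt (4-α) (by linarith)
  have J5 := hInt (5-α) (by linarith)
  have hI1 : (∫ ω in x..(Y/2), (ω - x) ^ (1-α)) = (Y/2 - x) ^ (2-α) / (2-α) := by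
    rw [hIval (1-α) (by linarith), show (1-α)+(1:ℝ) = 2-α by ring]
  have hI2 : (∫ ω in x..(Y/2), (ω - x) ^ (2-α)) = (Y/2 - x) ^ (3-α) / (3-α) := by
    rw [hIval (2-α) (by linarith), show (2-α)+(1:ℝ) = 3-α by ring]
  have hI3 : (∫ ω in x..(Y/2), (ω - x) ^ (3-α)) = (Y/2 - x) ^ (4-α) / (4-α) := by
    rw [hIval (3-α) (by linarith), show (3-α)+(1:ℝ) = 4-α by ring]
  have hI4 : (∫ ω in x..(Y/2), (ω - x) ^ (4-α)) = (Y/2 - x) ^ (5-α) / (5-α) := by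
    rw [hIval (4-α) (by linarith), show (4-α)+(1:ℝ) = 5-α by ring]
  have hI5 : (∫ ω in x..(Y/2), (ω - x) ^ (5-α)) = (Y/2 - x) ^ (6-α) / (6-α) := by
    rw [hIval (5-α) (by linarith), show (5-α)+(1:ℝ) = 6-α by ring]
  -- rewrite the integrand as a linear combination of pure powers
  have hcong : (∫ ω in x..(Y/2), (ω - x) ^ (1 - α) * deriv (deriv p) ω)
      = ∫ ω in x..(Y/2),
          ((6*(Y/2)^3*x - 36*(Y/2)^2*x^2 + 60*(Y/2)*x^3 - 30*x^4) * (ω - x)^(1-α)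
          + ((6*(Y/2)^3 - 72*(Y/2)^2*x + 180*(Y/2)*x^2 - 120*x^3) * (ω - x)^(2-α)
          + ((-36*(Y/2)^2 + 180*(Y/2)*x - 180*x^2) * (ω - x)^(3-α)
          + ((60*(Y/2) - 120*x) * (ω - x)^(4-α)
          + (-30) * (ω - x)^(5-α))))) := by
    apply intervalIntegral.integral_congr
    intro ω hω
    rw [Set.uIcc_of_le hx₁.le] at hω
    obtain ⟨hω₁, hω₂⟩ := hω
    dsimp only
    rcases eq_or_lt_of_le hω₁ with heq | hlt
    · rw [← heq, sub_self, Real.zero_rpow (by intro h; exact absurd h (by intro h'; linarith)),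
        Real.zero_rpow (by intro h; linarith), Real.zero_rpow (by intro h; linarith),
        Real.zero_rpow (by intro h; linarith), Real.zero_rpow (by intro h; linarith)]
      ring
    · have hu : (0:ℝ) < ω - x := by linarith
      have e2 : (ω - x)^(2-α) = (ω - x)^(1-α) * (ω - x) := by
        rw [show (2-α:ℝ) = (1-α)+1 by ring, Real.rpow_add_one hu.ne']
      have e3 : (ω - x)^(3-α) = (ω - x)^(2-α) * (ω - x) := by
        rw [show (3-α:ℝ) = (2-α)+1 by ring, Real.rpow_add_one hu.ne']
      have e4 : (ω - x)^(4-α) = (ω - x)^(3-α) * (ω - x) := by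
        rw [show (4-α:ℝ) = (3-α)+1 by ring, Real.rpow_add_one hu.ne']
      have e5 : (ω - x)^(5-α) = (ω - x)^(4-α) * (ω - x) := by
        rw [show (5-α:ℝ) = (4-α)+1 by ring, Real.rpow_add_one hu.ne']
      rw [hd2 ω, e5, e4, e3, e2]
      ring
  -- compute the integral
  rw [hcong,
    intervalIntegral.integral_add (J1.const_mul _)
      (((J2.const_mul _).add ((J3.const_mul _).add ((J4.const_mul _).add (J5.const_mul _))))),
    intervalIntegral.integral_add (J2.const_mul _)
      ((J3.const_mul _).add ((J4.const_mul _).add (J5.const_mul _))),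
    intervalIntegral.integral_add (J3.const_mul _) ((J4.const_mul _).add (J5.const_mul _)),
    intervalIntegral.integral_add (J4.const_mul _) (J5.const_mul _),
    intervalIntegral.integral_const_mul, intervalIntegral.integral_const_mul,
    intervalIntegral.integral_const_mul, intervalIntegral.integral_const_mul,
    intervalIntegral.integral_const_mul, hI1, hI2, hI3, hI4, hI5]
  -- Gamma recurrences
  have g3 : Real.Gamma (3-α) = (2-α) * Real.Gamma (2-α) := by
    rw [show (3-α:ℝ) = (2-α)+1 by ring, Real.Gamma_add_one (by linarith)]
  have g4 : Real.Gamma (4-α) = (3-α) * Real.Gamma (3-α) := by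
    rw [show (4-α:ℝ) = (3-α)+1 by ring, Real.Gamma_add_one (by linarith)]
  have g5 : Real.Gamma (5-α) = (4-α) * Real.Gamma (4-α) := by
    rw [show (5-α:ℝ) = (4-α)+1 by ring, Real.Gamma_add_one (by linarith)]
  have g6 : Real.Gamma (6-α) = (5-α) * Real.Gamma (5-α) := by
    rw [show (6-α:ℝ) = (5-α)+1 by ring, Real.Gamma_add_one (by linarith)]
  have g7 : Real.Gamma (7-α) = (6-α) * Real.Gamma (6-α) := by
    rw [show (7-α:ℝ) = (6-α)+1 by ring, Real.Gamma_add_one (by linarith)]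
  rw [g7, g6, g5, g4, g3]
  -- combine the powers of (Y/2 - x)
  have F2 : (Y/2 - x)^(α-3) * (Y/2 - x)^(2-α) = (Y/2 - x)⁻¹ := by
    rw [← Real.rpow_add hs, show (α-3)+(2-α) = (-1:ℝ) by ring, Real.rpow_neg_one]
  have F3 : (Y/2 - x)^(α-3) * (Y/2 - x)^(3-α) = 1 := by
    rw [← Real.rpow_add hs, show (α-3)+(3-α) = (0:ℝ) by ring, Real.rpow_zero]
  have F4 : (Y/2 - x)^(α-3) * (Y/2 - x)^(4-α) = (Y/2 - x) := by
    rw [← Real.rpow_add hs, show (α-3)+(4-α) = (1:ℝ) by ring, Real.rpow_one]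
  have F5 : (Y/2 - x)^(α-3) * (Y/2 - x)^(5-α) = (Y/2 - x)^2 := by
    rw [← Real.rpow_add hs, show (α-3)+(5-α) = ((2:ℕ):ℝ) by push_cast; ring,
      Real.rpow_natCast]
  have F6 : (Y/2 - x)^(α-3) * (Y/2 - x)^(6-α) = (Y/2 - x)^3 := by
    rw [← Real.rpow_add hs, show (α-3)+(6-α) = ((3:ℕ):ℝ) by push_cast; ring,
      Real.rpow_natCast]
  have hsne : Y / 2 - x ≠ 0 := hs.ne'
  have G2 : (Y/2 - x)^(α-3) * (Y/2 - x)^(2-α) * (Y/2 - x) = 1 := by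
    rw [F2]; exact inv_mul_cancel₀ hsne
  have G3 : (Y/2 - x)^(α-3) * (Y/2 - x)^(3-α) * (Y/2 - x) = (Y/2 - x) := by
    rw [F3, one_mul]
  have G4 : (Y/2 - x)^(α-3) * (Y/2 - x)^(4-α) * (Y/2 - x) = (Y/2 - x)^2 := by
    rw [F4]; ring
  have G5 : (Y/2 - x)^(α-3) * (Y/2 - x)^(5-α) * (Y/2 - x) = (Y/2 - x)^3 := by
    rw [F5]; ring
  have G6 : (Y/2 - x)^(α-3) * (Y/2 - x)^(6-α) * (Y/2 - x) = (Y/2 - x)^4 := by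
    rw [F6]; ring
  refine mul_left_cancel₀ hsne ?_
  have expand : (Y/2 - x) * ((Y/2 - x) ^ (α - 3) * ((1 / Real.Gamma (2 - α)) *
      ((6*(Y/2)^3*x - 36*(Y/2)^2*x^2 + 60*(Y/2)*x^3 - 30*x^4) * ((Y/2 - x)^(2-α)/(2-α))
      + ((6*(Y/2)^3 - 72*(Y/2)^2*x + 180*(Y/2)*x^2 - 120*x^3) * ((Y/2 - x)^(3-α)/(3-α))
      + ((-36*(Y/2)^2 + 180*(Y/2)*x - 180*x^2) * ((Y/2 - x)^(4-α)/(4-α))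
      + ((60*(Y/2) - 120*x) * ((Y/2 - x)^(5-α)/(5-α))
      + (-30) * ((Y/2 - x)^(6-α)/(6-α))))))))
      = (1 / Real.Gamma (2 - α)) *
      ((6*(Y/2)^3*x - 36*(Y/2)^2*x^2 + 60*(Y/2)*x^3 - 30*x^4)
          * ((Y/2 - x)^(α-3) * (Y/2 - x)^(2-α) * (Y/2 - x)) / (2-α)
      + ((6*(Y/2)^3 - 72*(Y/2)^2*x + 180*(Y/2)*x^2 - 120*x^3)
          * ((Y/2 - x)^(α-3) * (Y/2 - x)^(3-α) * (Y/2 - x)) / (3-α)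
      + ((-36*(Y/2)^2 + 180*(Y/2)*x - 180*x^2)
          * ((Y/2 - x)^(α-3) * (Y/2 - x)^(4-α) * (Y/2 - x)) / (4-α)
      + ((60*(Y/2) - 120*x)
          * ((Y/2 - x)^(α-3) * (Y/2 - x)^(5-α) * (Y/2 - x)) / (5-α)
      + (-30) * ((Y/2 - x)^(α-3) * (Y/2 - x)^(6-α) * (Y/2 - x)) / (6-α))))) := by
    ring
  rw [expand, G2, G3, G4, G5, G6]
  have hΓ : Real.Gamma (2-α) ≠ 0 := (Real.Gamma_pos_of_pos (by linarith)).ne'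
  have d2 : (2-α:ℝ) ≠ 0 := by intro h; linarith
  have d3 : (3-α:ℝ) ≠ 0 := by intro h; linarith
  have d4 : (4-α:ℝ) ≠ 0 := by intro h; linarith
  have d5 : (5-α:ℝ) ≠ 0 := by intro h; linarith
  have d6 : (6-α:ℝ) ≠ 0 := by intro h; linarith
  field_simp [hΓ, d2, d3, d4, d5, d6]
  ring
end
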